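/- Fix n ≥ 2 and nonnegative integers m, ℓ. Let B_ℓ = { x ∈ (ℤ_{≥0})^n : x_1 + ⋯ + x_n = ℓ }. Define the combinatorial R-matrix R on pairs (w, x) ∈ B_m × B_ℓ by R(w, x) = (x′, w′), where K_i = min over j = 0,1,…,n−1 of ( Σ_{p=1}^{j} w_{i−p} + Σ_{p=j+2}^{n} x_{i−p} ) (subscripts modulo n), x′_i = x_i + K_{i+1} − K_i, and w′_i = w_i + K_i − K_{i+1}. Let σ be the permutation of {1,…,n} with σ(1) = 1 and σ(i) = n+2−i for 2 ≤ i ≤ n, and let ρ be the map on pairs of n-tuples given by ρ(a, b) = ( (b_{σ(1)},…,b_{σ(n)}), (a_{σ(1)},…,a_{σ(n)}) ). Then R ∘ ρ = ρ ∘ R; that is, for all (x, w) ∈ B_ℓ × B_m, R(ρ(x, w)) = ρ(R(x, w)). -/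
import Mathlib


/-- `K_i = min_{j=0,…,n−1} ( Σ_{p=1}^{j} w_{i−p} + Σ_{p=j+2}^{n} x_{i−p} )`,
subscripts modulo `n`. -/
def Kfun (n : ℕ) [NeZero n] (w x : ZMod n → ℤ) (i : ZMod n) : ℤ :=
  (Finset.range n).inf' (Finset.nonempty_range_iff.mpr (NeZero.ne n))
    (fun j => (∑ p ∈ Finset.Icc 1 j, w (i - ((p : ℕ) : ZMod n))) +
      ∑ p ∈ Finset.Icc (j + 2) n, x (i - ((p : ℕ) : ZMod n)))

/-- The combinatorial R-matrix: `R(w,x) = (x′,w′)` with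
`x′_i = x_i + K_{i+1} − K_i` and `w′_i = w_i + K_i − K_{i+1}`. -/
def Rmat (n : ℕ) [NeZero n] (wx : (ZMod n → ℤ) × (ZMod n → ℤ)) :
    (ZMod n → ℤ) × (ZMod n → ℤ) :=
  (fun i => wx.2 i + Kfun n wx.1 wx.2 (i + 1) - Kfun n wx.1 wx.2 i,
   fun i => wx.1 i + Kfun n wx.1 wx.2 i - Kfun n wx.1 wx.2 (i + 1))

/-- The map `ρ(a,b) = ((b∘σ),(a∘σ))`, where `σ(1) = 1` and `σ(i) = n+2−i`;
on `ZMod n` the permutation `σ` is `i ↦ 2 − i`. -/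
def rhoMat (n : ℕ) (ab : (ZMod n → ℤ) × (ZMod n → ℤ)) :
    (ZMod n → ℤ) × (ZMod n → ℤ) :=
  (fun i => ab.2 (2 - i), fun i => ab.1 (2 - i))



lemma sum_rev (n : ℕ) [NeZero n] (f : ZMod n → ℤ) (c : ZMod n) (a b : ℕ)
    (ha : 1 ≤ a) (hb : b ≤ n) :
    ∑ p ∈ Finset.Icc a b, f (c - ((p : ℕ) : ZMod n)) =
    ∑ p ∈ Finset.Icc (n + 1 - b) (n + 1 - a), f (c - 1 + ((p : ℕ) : ZMod n)) := by
  refine Finset.sum_nbij' (fun p => n + 1 - p) (fun p => n + 1 - p) ?_ ?_ ?_ ?_ ?_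
  · intro p hp; simp only [Finset.mem_Icc] at *; omega
  · intro p hp; simp only [Finset.mem_Icc] at *; omega
  · intro p hp; simp only [Finset.mem_Icc] at *; omega
  · intro p hp; simp only [Finset.mem_Icc] at *; omega
  · intro p hp
    simp only [Finset.mem_Icc] at hp
    have hpn : p ≤ n + 1 := by omega
    have : ((n + 1 - p : ℕ) : ZMod n) = ((n + 1 : ℕ) : ZMod n) - (p : ZMod n) := by
      push_cast [Nat.cast_sub hpn]; ring
    rw [this]
    congr 1
    push_cast
    simp [ZMod.natCast_self]

lemma Kterm_eq (n : ℕ) [NeZero n] (x w : ZMod n → ℤ) (i : ZMod n) (j : ℕ) (hj : j < n) :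
    (∑ p ∈ Finset.Icc 1 (n - 1 - j), w (2 - (i - ((p : ℕ) : ZMod n)))) +
      ∑ p ∈ Finset.Icc (n - 1 - j + 2) n, x (2 - (i - ((p : ℕ) : ZMod n))) =
    (∑ p ∈ Finset.Icc 1 j, x ((3 - i) - ((p : ℕ) : ZMod n))) +
      ∑ p ∈ Finset.Icc (j + 2) n, w ((3 - i) - ((p : ℕ) : ZMod n)) := by
  rw [sum_rev n w (3 - i) (j + 2) n (by omega) le_rfl,
      sum_rev n x (3 - i) 1 j (le_rfl) (by omega)]
  have h1 : n + 1 - (j + 2) = n - 1 - j := by omega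
  have h2 : n + 1 - n = 1 := by omega
  have h3 : n + 1 - 1 = n := by omega
  have h4 : n - 1 - j + 2 = n + 1 - j := by omega
  rw [h1, h2, h3, h4]
  rw [add_comm]
  congr 1 <;> apply Finset.sum_congr rfl <;> intro p _ <;> ring_nf

lemma Kswap (n : ℕ) [NeZero n] (x w : ZMod n → ℤ) (i : ZMod n) :
    Kfun n (fun k => w (2 - k)) (fun k => x (2 - k)) i = Kfun n x w (3 - i) := by
  unfold Kfun
  apply le_antisymm
  · apply Finset.le_inf'
    intro j hj
    simp only [Finset.mem_range] at hj
    refine le_trans (Finset.inf'_le _ (Finset.mem_range.mpr (show n - 1 - j < n by omega))) ?_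
    exact le_of_eq (Kterm_eq n x w i j hj)
  · apply Finset.le_inf'
    intro j hj
    simp only [Finset.mem_range] at hj
    refine le_trans (Finset.inf'_le _ (Finset.mem_range.mpr (show n - 1 - j < n by omega))) ?_
    refine le_of_eq ?_
    have := Kterm_eq n x w i (n - 1 - j) (by omega)
    rw [show n - 1 - (n - 1 - j) = j by omega] at this
    exact this.symm

/-- The combinatorial R-matrix commutes with `ρ`: `R ∘ ρ = ρ ∘ R`
(Lemma 7.2 of the paper). -/
theorem stmt_15 (n : ℕ) [NeZero n] (hn : 2 ≤ n) (m ℓ : ℕ)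
    (x w : ZMod n → ℤ)
    (hx_nonneg : ∀ i : ZMod n, 0 ≤ x i) (hx_sum : ∑ i : ZMod n, x i = (ℓ : ℤ))
    (hw_nonneg : ∀ i : ZMod n, 0 ≤ w i) (hw_sum : ∑ i : ZMod n, w i = (m : ℤ)) :
    Rmat n (rhoMat n (x, w)) = rhoMat n (Rmat n (x, w)) := by
  simp only [Rmat, rhoMat, Prod.mk.injEq]
  constructor <;> funext i <;>
    rw [Kswap n x w i, Kswap n x w (i + 1),
      show (3 : ZMod n) - (i + 1) = 2 - i by ring,
      show (2 : ZMod n) - i + 1 = 3 - i by ring] <;> ring
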